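/- Let A, B ∈ M_n(FT), matrices over the finitary tropical semiring. Then A J B if and only if A D B, i.e., Green's relations D and J coincide on M_n(FT). -/

import Mathlib

/-- Tropical (max-plus) matrix multiplication over `FT = (ℝ, max, +)`. -/
def tropMul {n : ℕ} [NeZero n] (X Y : Matrix (Fin n) (Fin n) ℝ) :
    Matrix (Fin n) (Fin n) ℝ :=
  fun i j => Finset.univ.sup' Finset.univ_nonempty fun k => X i k + Y k j

variable {n : ℕ} [NeZero n]

noncomputable def tsup (f : Fin n → ℝ) : ℝ := Finset.univ.sup' Finset.univ_nonempty f

lemma le_tsup (f : Fin n → ℝ) (k : Fin n) : f k ≤ tsup f :=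
  Finset.le_sup' f (Finset.mem_univ k)

lemma tsup_le {f : Fin n → ℝ} {a : ℝ} (h : ∀ k, f k ≤ a) : tsup f ≤ a :=
  Finset.sup'_le _ _ fun k _ => h k

lemma exists_tsup (f : Fin n → ℝ) : ∃ k, tsup f = f k := by
  obtain ⟨k, _, hk⟩ := Finset.exists_mem_eq_sup' (Finset.univ_nonempty) f
  exact ⟨k, hk⟩

lemma tsup_le_tsup_add {f g : Fin n → ℝ} {c : ℝ} (h : ∀ k, f k ≤ g k + c) :
    tsup f ≤ tsup g + c :=
  tsup_le fun k => (h k).trans (by linarith [le_tsup g k])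

lemma tsup_add_const (f : Fin n → ℝ) (c : ℝ) :
    tsup (fun k => f k + c) = tsup f + c := by
  apply le_antisymm
  · exact tsup_le_tsup_add fun k => le_rfl
  · obtain ⟨k, hk⟩ := exists_tsup f
    rw [hk]; exact le_tsup (fun k => f k + c) k

noncomputable def vmul (X : Matrix (Fin n) (Fin n) ℝ) (v : Fin n → ℝ) : Fin n → ℝ :=
  fun i => tsup (fun k => X i k + v k)

lemma tropMul_apply (X Y : Matrix (Fin n) (Fin n) ℝ) (i j : Fin n) :
    tropMul X Y i j = tsup (fun k => X i k + Y k j) := rfl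

lemma vmul_vmul (X Y : Matrix (Fin n) (Fin n) ℝ) (v : Fin n → ℝ) :
    vmul (tropMul X Y) v = vmul X (vmul Y v) := by
  funext i
  apply le_antisymm
  · apply tsup_le; intro k
    rw [tropMul_apply]
    obtain ⟨l, hl⟩ := exists_tsup (fun l => X i l + Y l k)
    rw [hl]
    have h1 : Y l k + v k ≤ vmul Y v l := le_tsup (fun m => Y l m + v m) k
    have h2 : X i l + vmul Y v l ≤ vmul X (vmul Y v) i := le_tsup (fun m => X i m + vmul Y v m) l
    simp only [vmul] at h1 h2 ⊢
    linarith
  · apply tsup_le; intro l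
    show X i l + vmul Y v l ≤ _
    obtain ⟨k, hk⟩ := exists_tsup (fun k => Y l k + v k)
    have h1 : vmul Y v l = Y l k + v k := hk
    rw [h1]
    have h3 : tropMul X Y i k + v k ≤ vmul (tropMul X Y) v i := le_tsup (fun m => tropMul X Y i m + v m) k
    have h2' : X i l + Y l k ≤ tropMul X Y i k := le_tsup (fun m => X i m + Y m k) l
    simp only [vmul, tropMul_apply] at h2' h3 ⊢
    linarith

lemma tropMul_assoc (X Y Z : Matrix (Fin n) (Fin n) ℝ) :
    tropMul (tropMul X Y) Z = tropMul X (tropMul Y Z) := by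
  funext i j
  have := congrFun (vmul_vmul X Y (fun k => Z k j)) i
  simpa [tropMul_apply, vmul, tsup] using this

lemma vmul_col (X Y : Matrix (Fin n) (Fin n) ℝ) (j : Fin n) :
    (fun i => tropMul X Y i j) = vmul X (fun k => Y k j) := rfl

/-- base index -/
def i0 : Fin n := ⟨0, Nat.pos_of_ne_zero (NeZero.ne n)⟩

/-- Hilbert projective (pseudo)metric on `ℝⁿ`. -/
noncomputable def hd (x y : Fin n → ℝ) : ℝ :=
  tsup (fun i => x i - y i) + tsup (fun i => y i - x i)

lemma hd_nonneg (x y : Fin n → ℝ) : 0 ≤ hd x y := by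
  have h1 : x (i0) - y (i0) ≤ tsup (fun i => x i - y i) := le_tsup (fun i => x i - y i) i0
  have h2 : y (i0) - x (i0) ≤ tsup (fun i => y i - x i) := le_tsup (fun i => y i - x i) i0
  unfold hd; linarith

lemma hd_triangle (x y z : Fin n → ℝ) : hd x z ≤ hd x y + hd y z := by
  have h1 : tsup (fun i => x i - z i) ≤ tsup (fun i => x i - y i) + tsup (fun i => y i - z i) := by
    apply tsup_le; intro k
    have := le_tsup (fun i => x i - y i) k
    have := le_tsup (fun i => y i - z i) k
    linarith
  have h2 : tsup (fun i => z i - x i) ≤ tsup (fun i => z i - y i) + tsup (fun i => y i - x i) := by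
    apply tsup_le; intro k
    have := le_tsup (fun i => z i - y i) k
    have := le_tsup (fun i => y i - x i) k
    linarith
  unfold hd; linarith

lemma hd_shift (x y : Fin n → ℝ) (c d : ℝ) :
    hd (fun i => x i + c) (fun i => y i + d) = hd x y := by
  unfold hd
  have h1 : (fun i => (x i + c) - (y i + d)) = fun i => (x i - y i) + (c - d) := by
    funext i; ring
  have h2 : (fun i => (y i + d) - (x i + c)) = fun i => (y i - x i) + (d - c) := by
    funext i; ring
  rw [h1, h2, tsup_add_const, tsup_add_const]; ring

lemma hd_eq_zero {x y : Fin n → ℝ} (h : hd x y = 0) (h0 : x i0 = y i0) : x = y := by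
  have hs : tsup (fun i => x i - y i) = - tsup (fun i => y i - x i) := by
    unfold hd at h; linarith
  funext i
  have h1 : x i - y i ≤ tsup (fun j => x j - y j) := le_tsup (fun j => x j - y j) i
  have h2 : y i - x i ≤ tsup (fun j => y j - x j) := le_tsup (fun j => y j - x j) i
  have h3 : x i0 - y i0 ≤ tsup (fun i => x i - y i) := le_tsup (fun i => x i - y i) i0
  have h4 : y i0 - x i0 ≤ tsup (fun i => y i - x i) := le_tsup (fun i => y i - x i) i0
  have h5 : (0:ℝ) ≤ tsup (fun i => x i - y i) := by rw [hs]; linarith [h4, h0]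
  -- from h0 : x i0 = y i0, h4 gives 0 ≤ tsup (y - x), so tsup (x-y) = -tsup(y-x) ≤ 0
  -- also 0 = x i0 - y i0 ≤ tsup (x - y). So tsup(x-y) = 0 = tsup(y-x).
  have h6 : tsup (fun i => x i - y i) = 0 := by
    have : x i0 - y i0 = 0 := by rw [h0]; ring
    have h7 : (0:ℝ) ≤ tsup (fun i => y i - x i) := by
      calc (0:ℝ) = y i0 - x i0 := by rw [h0]; ring
      _ ≤ _ := h4
    linarith [hs]
  have h8 : tsup (fun i => y i - x i) = 0 := by rw [h6] at hs; linarith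
  have := h1.trans_eq h6
  have := h2.trans_eq h8
  linarith

lemma hd_le_two_dist (x y : Fin n → ℝ) : hd x y ≤ 2 * dist x y := by
  have h1 : tsup (fun i => x i - y i) ≤ dist x y := by
    apply tsup_le; intro k
    calc x k - y k ≤ |x k - y k| := le_abs_self _
    _ = dist (x k) (y k) := (Real.dist_eq _ _).symm
    _ ≤ dist x y := dist_le_pi_dist x y k
  have h2 : tsup (fun i => y i - x i) ≤ dist x y := by
    apply tsup_le; intro k
    calc y k - x k ≤ |y k - x k| := le_abs_self _
    _ = dist (y k) (x k) := (Real.dist_eq _ _).symm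
    _ = dist (x k) (y k) := dist_comm _ _
    _ ≤ dist x y := dist_le_pi_dist x y k
  unfold hd; linarith

lemma vmul_nonexpansive (P : Matrix (Fin n) (Fin n) ℝ) (x y : Fin n → ℝ) :
    hd (vmul P x) (vmul P y) ≤ hd x y := by
  have key : ∀ (u v : Fin n → ℝ) (i : Fin n),
      vmul P u i - vmul P v i ≤ tsup (fun k => u k - v k) := by
    intro u v i
    have h1 : vmul P u i ≤ vmul P v i + tsup (fun k => u k - v k) := by
      apply tsup_le; intro k
      have h2 : P i k + v k ≤ vmul P v i := le_tsup (fun m => P i m + v m) k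
      have h3 : u k - v k ≤ tsup (fun m => u m - v m) := le_tsup (fun m => u m - v m) k
      linarith
    linarith
  have k1 : tsup (fun i => vmul P x i - vmul P y i) ≤ tsup (fun k => x k - y k) :=
    tsup_le fun i => key x y i
  have k2 : tsup (fun i => vmul P y i - vmul P x i) ≤ tsup (fun k => y k - x k) :=
    tsup_le fun i => key y x i
  unfold hd; linarith

lemma vmul_add_const (X : Matrix (Fin n) (Fin n) ℝ) (v : Fin n → ℝ) (c : ℝ) :
    vmul X (fun k => v k + c) = fun i => vmul X v i + c := by
  funext i
  show tsup (fun k => X i k + (v k + c)) = _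
  have : (fun k => X i k + (v k + c)) = fun k => (X i k + v k) + c := by
    funext k; ring
  rw [this, tsup_add_const]
  rfl

lemma vmul_lipschitz (X : Matrix (Fin n) (Fin n) ℝ) (v w : Fin n → ℝ) :
    dist (vmul X v) (vmul X w) ≤ dist v w := by
  rw [dist_pi_le_iff dist_nonneg]
  intro i
  rw [Real.dist_eq, abs_le]
  have key : ∀ (u v : Fin n → ℝ), vmul X u i - vmul X v i ≤ dist u v := by
    intro u v
    have h1 : vmul X u i ≤ vmul X v i + dist u v := by
      apply tsup_le; intro k
      have h2 : X i k + v k ≤ vmul X v i := le_tsup (fun m => X i m + v m) k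
      have h3 : u k - v k ≤ dist u v := by
        calc u k - v k ≤ |u k - v k| := le_abs_self _
        _ = dist (u k) (v k) := (Real.dist_eq _ _).symm
        _ ≤ dist u v := dist_le_pi_dist u v k
      linarith
    linarith
  have ha := key v w
  have hb := key w v
  rw [dist_comm w v] at hb
  constructor <;> linarith

lemma vmul_continuous (X : Matrix (Fin n) (Fin n) ℝ) : Continuous (vmul X) := by
  apply LipschitzWith.continuous (K := 1)
  apply LipschitzWith.of_dist_le_mul
  intro v w
  simpa using vmul_lipschitz X v w

/-- normalization: subtract coordinate `i0`. -/
noncomputable def nu (x : Fin n → ℝ) : Fin n → ℝ := fun i => x i - x i0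

lemma nu_continuous : Continuous (nu (n := n)) := by
  apply continuous_pi
  intro i
  exact ((continuous_apply i).sub (continuous_apply i0))

lemma nu_i0 (x : Fin n → ℝ) : nu x i0 = 0 := by simp [nu]

lemma nu_add_const (x : Fin n → ℝ) (c : ℝ) : nu (fun i => x i + c) = nu x := by
  funext i; simp [nu]

lemma hd_nu_nu (x y : Fin n → ℝ) : hd (nu x) (nu y) = hd x y := by
  have hx : nu x = fun i => x i + (-(x i0)) := by funext i; simp [nu]; ring
  have hy : nu y = fun i => y i + (-(y i0)) := by funext i; simp [nu]; ring
  rw [hx, hy, hd_shift]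

lemma nu_eq_imp {x y : Fin n → ℝ} (h : nu x = nu y) : x = fun i => y i + (x i0 - y i0) := by
  funext i
  have := congrFun h i
  simp [nu] at this
  linarith

lemma abs_entry_le (A : Matrix (Fin n) (Fin n) ℝ) (p q : Fin n) :
    |A p q| ≤ tsup (fun i => tsup (fun k => |A i k|)) :=
  (le_tsup (fun k => |A p k|) q).trans (le_tsup (fun i => tsup (fun k => |A i k|)) p)

lemma col_in_colspace (A : Matrix (Fin n) (Fin n) ℝ) (j : Fin n) :
    ∃ μ, (fun i => A i j) = vmul A μ := by
  set Kb := tsup (fun i => tsup (fun k => |A i k|)) with hKb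
  refine ⟨fun k => if k = j then 0 else -(2*Kb+1), ?_⟩
  funext i
  have habs : ∀ p q, |A p q| ≤ Kb := fun p q => abs_entry_le A p q
  apply le_antisymm
  · have h := le_tsup (fun k => A i k + if k = j then 0 else -(2*Kb+1)) j
    simpa [vmul] using h
  · apply tsup_le; intro k
    by_cases hk : k = j
    · subst hk; simp
    · simp only [hk, if_false]
      have h1 := (abs_le.mp (habs i k)).2
      have h2 := (abs_le.mp (habs i j)).1
      linarith

noncomputable def Rbd (M : Matrix (Fin n) (Fin n) ℝ) : ℝ :=
  2 * tsup (fun i => tsup (fun k => |M i k|)) + 1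

lemma clamp (M : Matrix (Fin n) (Fin n) ℝ) (μ : Fin n → ℝ) :
    ∃ μ' ∈ Set.Icc (fun _ => -(Rbd M)) (fun _ => (0:ℝ)),
      nu (vmul M μ') = nu (vmul M μ) := by
  set Kb := tsup (fun i => tsup (fun k => |M i k|)) with hKb
  have habs : ∀ p q, |M p q| ≤ Kb := fun p q => abs_entry_le M p q
  have hKb0 : 0 ≤ Kb := (abs_nonneg _).trans (habs i0 i0)
  have hR : Rbd M = 2*Kb + 1 := rfl
  obtain ⟨k0, hk0⟩ := exists_tsup μ
  set c := tsup μ with hc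
  set μ1 : Fin n → ℝ := fun k => μ k - c with hμ1def
  have hμ1le : ∀ k, μ1 k ≤ 0 := fun k => by
    have := le_tsup μ k; simp only [hμ1def]; linarith
  have hμ1k0 : μ1 k0 = 0 := by simp only [hμ1def]; rw [hk0]; ring
  have hshift : vmul M μ = fun i => vmul M μ1 i + c := by
    have hμ : μ = fun k => μ1 k + c := by funext k; simp [hμ1def]
    rw [hμ, vmul_add_const]
  set μ' : Fin n → ℝ := fun k => max (μ1 k) (-(Rbd M)) with hμ'def
  have hmain : vmul M μ' = vmul M μ1 := by
    funext i
    apply le_antisymm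
    · apply tsup_le; intro k
      by_cases hcase : -(Rbd M) ≤ μ1 k
      · have : μ' k = μ1 k := max_eq_left hcase
        rw [this]
        exact le_tsup (fun m => M i m + μ1 m) k
      · push_neg at hcase
        have hμ'k : μ' k = -(Rbd M) := max_eq_right hcase.le
        rw [hμ'k]
        have hb := le_tsup (fun m => M i m + μ1 m) k0
        have h1 := (abs_le.mp (habs i k)).2
        have h2 := (abs_le.mp (habs i k0)).1
        rw [hR]
        simp only [hμ1k0] at hb
        show M i k + -(2*Kb+1) ≤ tsup (fun m => M i m + μ1 m)
        linarith
    · apply tsup_le; intro k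
      have h1 : μ1 k ≤ μ' k := le_max_left _ _
      have := le_tsup (fun m => M i m + μ' m) k
      show M i k + μ1 k ≤ tsup (fun m => M i m + μ' m)
      linarith
  refine ⟨μ', ⟨?_, ?_⟩, ?_⟩
  · intro k
    exact le_max_right _ _
  · intro k
    have h1 : μ1 k ≤ 0 := hμ1le k
    have h2 : -(Rbd M) ≤ 0 := by rw [hR]; linarith
    exact max_le h1 h2
  · rw [hmain, hshift, nu_add_const]

noncomputable def iterT (T : Matrix (Fin n) (Fin n) ℝ) (μ0 : Fin n → ℝ) : ℕ → (Fin n → ℝ)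
  | 0 => μ0
  | m+1 => vmul T (iterT T μ0 m)

lemma Rstab (A P T : Matrix (Fin n) (Fin n) ℝ)
    (h : A = tropMul P (tropMul A T)) :
    ∃ X, A = tropMul (tropMul A T) X := by
  set M := tropMul A T with hM
  have colmem : ∀ j, ∃ μ, (fun i => A i j) = vmul M μ := by
    intro j
    set K : Set (Fin n → ℝ) :=
      (fun μ => nu (vmul M μ)) '' Set.Icc (fun _ => -(Rbd M)) (fun _ => (0:ℝ)) with hK
    have hKc : IsCompact K :=
      (isCompact_Icc).image ((nu_continuous).comp (vmul_continuous M))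
    have hKmem : ∀ μ, nu (vmul M μ) ∈ K := by
      intro μ
      obtain ⟨μ', hμ'I, hμ'⟩ := clamp M μ
      exact ⟨μ', hμ'I, hμ'⟩
    have hKnorm : ∀ z ∈ K, z i0 = 0 := by
      rintro z ⟨μ, -, rfl⟩
      exact nu_i0 _
    obtain ⟨μ0, hμ0⟩ := col_in_colspace A j
    have FG : ∀ μ, vmul M μ = vmul A (vmul T μ) := fun μ => by rw [hM, vmul_vmul]
    have GP : ∀ μ, vmul A μ = vmul P (vmul M μ) := by
      intro μ
      conv_lhs => rw [h]
      exact vmul_vmul P M μ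
    have theta : ∀ μ, nu (vmul P (nu (vmul M μ))) = nu (vmul A μ) := by
      intro μ
      have h1 : nu (vmul M μ) = fun k => vmul M μ k + (-(vmul M μ i0)) := by
        funext k; simp [nu]; ring
      rw [h1, vmul_add_const, nu_add_const, GP]
    have theta_nonexp : ∀ u v : Fin n → ℝ,
        hd (nu (vmul P u)) (nu (vmul P v)) ≤ hd u v := by
      intro u v
      rw [hd_nu_nu]; exact vmul_nonexpansive P u v
    set y : ℕ → (Fin n → ℝ) := fun m => nu (vmul A (iterT T μ0 m)) with hy
    have hyM : ∀ m, y (m+1) = nu (vmul M (iterT T μ0 m)) := by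
      intro m
      show nu (vmul A (vmul T (iterT T μ0 m))) = nu (vmul M (iterT T μ0 m))
      rw [FG]
    have hyK : ∀ m, y (m+1) ∈ K := by
      intro m; rw [hyM]; exact hKmem _
    have hchain : ∀ m, nu (vmul P (y (m+1))) = y m := by
      intro m; rw [hyM]; exact theta _
    have hmono : ∀ i m, hd (y 0) (y m) ≤ hd (y i) (y (i+m)) := by
      intro i
      induction i with
      | zero => intro m; simp
      | succ i ih =>
        intro m
        calc hd (y 0) (y m) ≤ hd (y i) (y (i+m)) := ih m
        _ = hd (nu (vmul P (y (i+1)))) (nu (vmul P (y (i+m+1)))) := by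
            rw [hchain, hchain]
        _ ≤ hd (y (i+1)) (y (i+m+1)) := theta_nonexp _ _
        _ = hd (y (i+1)) (y (i+1+m)) := by
            have harith : i+m+1 = i+1+m := by omega
            rw [harith]
    have main : ∀ ε : ℝ, 0 < ε → ∃ z ∈ K, hd (y 0) z < ε := by
      intro ε hε
      obtain ⟨a, haK, φ, hφ, hconv⟩ := hKc.tendsto_subseq (x := fun m => y (m+1)) hyK
      rw [Metric.tendsto_atTop] at hconv
      obtain ⟨N, hN⟩ := hconv (ε/8) (by linarith)
      have d1 : dist (y (φ N + 1)) a < ε/8 := hN N (le_refl N)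
      have d2 : dist (y (φ (N+1) + 1)) a < ε/8 := hN (N+1) (Nat.le_succ N)
      have hij : φ N + 1 < φ (N+1) + 1 := Nat.succ_lt_succ (hφ (Nat.lt_succ_self N))
      have hdist : dist (y (φ N + 1)) (y (φ (N+1) + 1)) < ε/4 := by
        have ht := dist_triangle (y (φ N + 1)) a (y (φ (N+1) + 1))
        have := dist_comm (y (φ (N+1) + 1)) a
        linarith [d1, d2, ht, dist_comm a (y (φ (N+1) + 1))]
      have hkey : hd (y 0) (y ((φ (N+1) + 1) - (φ N + 1)))
          ≤ hd (y (φ N + 1)) (y (φ (N+1) + 1)) := by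
        have hm := hmono (φ N + 1) ((φ (N+1) + 1) - (φ N + 1))
        have harith : (φ N + 1) + ((φ (N+1) + 1) - (φ N + 1)) = φ (N+1) + 1 := by omega
        rwa [harith] at hm
      refine ⟨y ((φ (N+1) + 1) - (φ N + 1)), ?_, ?_⟩
      · have h1 : (φ (N+1) + 1) - (φ N + 1) = ((φ (N+1) + 1) - (φ N + 1) - 1) + 1 := by omega
        rw [h1]; exact hyK _
      · have h2 := hd_le_two_dist (y (φ N + 1)) (y (φ (N+1) + 1))
        linarith
    have zseq : ∀ m : ℕ, ∃ z, z ∈ K ∧ hd (y 0) z < 1/(m+1) := by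
      intro m
      obtain ⟨z, hz1, hz2⟩ := main (1/(m+1)) (by positivity)
      exact ⟨z, hz1, hz2⟩
    choose z hzK hz using zseq
    obtain ⟨a, haK, φ, hφ, hconv⟩ := hKc.tendsto_subseq hzK
    have hhd0 : hd (y 0) a = 0 := by
      have hub : ∀ m : ℕ, hd (y 0) a ≤ 1/((m:ℝ)+1) + 2 * dist (z (φ m)) a := by
        intro m
        have t1 : hd (y 0) a ≤ hd (y 0) (z (φ m)) + hd (z (φ m)) a := hd_triangle _ _ _
        have t2 : hd (z (φ m)) a ≤ 2 * dist (z (φ m)) a := hd_le_two_dist _ _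
        have t3 : hd (y 0) (z (φ m)) < 1/((φ m : ℝ)+1) := by exact_mod_cast hz (φ m)
        have hmφ : ((m:ℝ) + 1) ≤ ((φ m : ℝ) + 1) := by
          have hle : m ≤ φ m := hφ.le_apply
          exact_mod_cast Nat.succ_le_succ hle
        have t4 : 1/((φ m:ℝ)+1) ≤ 1/((m:ℝ)+1) :=
          one_div_le_one_div_of_le (by positivity) hmφ
        linarith
      have l2 : Filter.Tendsto (fun m => dist ((z ∘ φ) m) a) Filter.atTop (nhds 0) :=
        tendsto_iff_dist_tendsto_zero.mp hconv
      have l1 : Filter.Tendsto (fun m : ℕ => 1/((m:ℝ)+1)) Filter.atTop (nhds 0) :=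
        tendsto_one_div_add_atTop_nhds_zero_nat
      have hlim : Filter.Tendsto (fun m : ℕ => 1/((m:ℝ)+1) + 2 * dist (z (φ m)) a)
          Filter.atTop (nhds 0) := by
        have := l1.add (l2.const_mul 2)
        simpa [Function.comp] using this
      have hle := ge_of_tendsto hlim (Filter.Eventually.of_forall hub)
      linarith [hd_nonneg (y 0) a]
    have ha0 : a i0 = 0 := hKnorm a haK
    have hxa : y 0 = a := hd_eq_zero hhd0 (by rw [ha0]; exact nu_i0 _)
    obtain ⟨μ', -, hμ'⟩ := haK
    have hμ'' : nu (vmul M μ') = a := hμ'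
    have hnueq : nu (vmul A μ0) = nu (vmul M μ') := by
      rw [hμ'', ← hxa]
      rfl
    have heq := nu_eq_imp hnueq
    obtain ⟨c, hc⟩ : ∃ c, vmul A μ0 = fun i => vmul M μ' i + c := ⟨_, heq⟩
    refine ⟨fun k => μ' k + c, ?_⟩
    rw [hμ0, hc, vmul_add_const]
  choose μs hμs using colmem
  refine ⟨fun k jj => μs jj k, ?_⟩
  funext i jj
  exact congrFun (hμs jj) i

def trn (M : Matrix (Fin n) (Fin n) ℝ) : Matrix (Fin n) (Fin n) ℝ := fun i j => M j i

lemma trn_trn (M : Matrix (Fin n) (Fin n) ℝ) : trn (trn M) = M := rfl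

lemma trn_tropMul (X Y : Matrix (Fin n) (Fin n) ℝ) :
    trn (tropMul X Y) = tropMul (trn Y) (trn X) := by
  funext i j
  show tropMul X Y j i = tsup (fun k => Y k i + X j k)
  rw [tropMul_apply]
  congr 1
  funext k
  ring

lemma Lstab (B S V : Matrix (Fin n) (Fin n) ℝ)
    (h : B = tropMul (tropMul S B) V) :
    ∃ Y, B = tropMul Y (tropMul S B) := by
  have h' : trn B = tropMul (trn V) (tropMul (trn B) (trn S)) := by
    conv_lhs => rw [h]
    rw [trn_tropMul, trn_tropMul]
  obtain ⟨X, hX⟩ := Rstab (trn B) (trn V) (trn S) h'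
  refine ⟨trn X, ?_⟩
  have h2 := congrArg trn hX
  rw [trn_trn, trn_tropMul, trn_tropMul] at h2
  exact h2

/-- `A ≤_J B` in `M_n(FT)`: `A ∈ M¹ B M¹`. -/
def Jle (A B : Matrix (Fin n) (Fin n) ℝ) : Prop :=
  A = B ∨ (∃ P, A = tropMul P B) ∨ (∃ Q, A = tropMul B Q) ∨
    ∃ P Q, A = tropMul (tropMul P B) Q

/-- `A ≤_R B`: `A ∈ B M¹`. -/
def Rle (A B : Matrix (Fin n) (Fin n) ℝ) : Prop :=
  A = B ∨ ∃ Q, A = tropMul B Q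

/-- `A ≤_L B`: `A ∈ M¹ B`. -/
def Lle (A B : Matrix (Fin n) (Fin n) ℝ) : Prop :=
  A = B ∨ ∃ P, A = tropMul P B

/-- `D = J` for finitary tropical matrices: `A J B` iff `A D B` in `M_n(FT)`. -/
theorem stmt12 (A B : Matrix (Fin n) (Fin n) ℝ) :
    (Jle A B ∧ Jle B A) ↔
      ∃ C : Matrix (Fin n) (Fin n) ℝ,
        (Rle A C ∧ Rle C A) ∧ (Lle C B ∧ Lle B C) := by
  constructor
  · rintro ⟨hab, hba⟩
    rcases hab with hab | ⟨P, hP⟩ | ⟨Q, hQ⟩ | ⟨P, Q, hPQ⟩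
    · exact ⟨A, ⟨Or.inl rfl, Or.inl rfl⟩, ⟨Or.inl hab, Or.inl hab.symm⟩⟩
    · -- A = P ⊗ B ; take C := A
      refine ⟨A, ⟨Or.inl rfl, Or.inl rfl⟩, ⟨Or.inr ⟨P, hP⟩, ?_⟩⟩
      rcases hba with hba | ⟨U, hU⟩ | ⟨V, hV⟩ | ⟨U, V, hUV⟩
      · exact Or.inl hba
      · exact Or.inr ⟨U, hU⟩
      · have hform : B = tropMul (tropMul P B) V := by rw [← hP, ← hV]
        obtain ⟨Y, hY⟩ := Lstab B P V hform
        exact Or.inr ⟨Y, by rw [hP]; exact hY⟩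
      · have hform : B = tropMul (tropMul (tropMul U P) B) V := by
          calc B = tropMul (tropMul U A) V := hUV
          _ = tropMul (tropMul U (tropMul P B)) V := by rw [hP]
          _ = tropMul (tropMul (tropMul U P) B) V := by rw [tropMul_assoc U P B]
        obtain ⟨Y, hY⟩ := Lstab B (tropMul U P) V hform
        refine Or.inr ⟨tropMul Y U, ?_⟩
        rw [hP]
        calc B = tropMul Y (tropMul (tropMul U P) B) := hY
        _ = tropMul Y (tropMul U (tropMul P B)) := by rw [tropMul_assoc U P B]
        _ = tropMul (tropMul Y U) (tropMul P B) := by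
            rw [tropMul_assoc Y U (tropMul P B)]
    · -- A = B ⊗ Q ; take C := B
      refine ⟨B, ⟨Or.inr ⟨Q, hQ⟩, ?_⟩, Or.inl rfl, Or.inl rfl⟩
      rcases hba with hba | ⟨U, hU⟩ | ⟨V, hV⟩ | ⟨U, V, hUV⟩
      · exact Or.inl hba
      · have hform : B = tropMul U (tropMul B Q) := by rw [← hQ]; exact hU
        obtain ⟨X, hX⟩ := Rstab B U Q hform
        rw [← hQ] at hX
        exact Or.inr ⟨X, hX⟩
      · exact Or.inr ⟨V, hV⟩
      · have hform : B = tropMul U (tropMul B (tropMul Q V)) := by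
          calc B = tropMul (tropMul U A) V := hUV
          _ = tropMul U (tropMul A V) := by rw [tropMul_assoc U A V]
          _ = tropMul U (tropMul (tropMul B Q) V) := by rw [hQ]
          _ = tropMul U (tropMul B (tropMul Q V)) := by rw [tropMul_assoc B Q V]
        obtain ⟨X, hX⟩ := Rstab B U (tropMul Q V) hform
        refine Or.inr ⟨tropMul V X, ?_⟩
        calc B = tropMul (tropMul B (tropMul Q V)) X := hX
        _ = tropMul (tropMul (tropMul B Q) V) X := by rw [tropMul_assoc B Q V]
        _ = tropMul (tropMul B Q) (tropMul V X) := by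
            rw [tropMul_assoc (tropMul B Q) V X]
        _ = tropMul A (tropMul V X) := by rw [← hQ]
    · -- A = (P ⊗ B) ⊗ Q ; take C := P ⊗ B
      rcases hba with hba | ⟨U, hU⟩ | ⟨V, hV⟩ | ⟨U, V, hUV⟩
      · -- B = A
        refine ⟨tropMul P B, ⟨Or.inr ⟨Q, hPQ⟩, ?_⟩, Or.inr ⟨P, rfl⟩, ?_⟩
        · have hform : tropMul P B = tropMul P (tropMul (tropMul P B) Q) := by
            conv_lhs => rw [hba, hPQ]
          obtain ⟨X, hX⟩ := Rstab (tropMul P B) P Q hform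
          rw [← hPQ] at hX
          exact Or.inr ⟨X, hX⟩
        · have hform : B = tropMul (tropMul P B) Q := hba.trans hPQ
          obtain ⟨Y, hY⟩ := Lstab B P Q hform
          exact Or.inr ⟨Y, hY⟩
      · -- B = U ⊗ A
        refine ⟨tropMul P B, ⟨Or.inr ⟨Q, hPQ⟩, ?_⟩, Or.inr ⟨P, rfl⟩, ?_⟩
        · have hform : tropMul P B
              = tropMul (tropMul P U) (tropMul (tropMul P B) Q) := by
            calc tropMul P B = tropMul P (tropMul U A) := by rw [← hU]
            _ = tropMul P (tropMul U (tropMul (tropMul P B) Q)) := by rw [hPQ]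
            _ = tropMul (tropMul P U) (tropMul (tropMul P B) Q) := by
                rw [tropMul_assoc P U (tropMul (tropMul P B) Q)]
          obtain ⟨X, hX⟩ := Rstab (tropMul P B) (tropMul P U) Q hform
          rw [← hPQ] at hX
          exact Or.inr ⟨X, hX⟩
        · have hform : B = tropMul (tropMul (tropMul U P) B) Q := by
            calc B = tropMul U A := hU
            _ = tropMul U (tropMul (tropMul P B) Q) := by rw [hPQ]
            _ = tropMul (tropMul U (tropMul P B)) Q := by
                rw [tropMul_assoc U (tropMul P B) Q]
            _ = tropMul (tropMul (tropMul U P) B) Q := by rw [tropMul_assoc U P B]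
          obtain ⟨Y, hY⟩ := Lstab B (tropMul U P) Q hform
          refine Or.inr ⟨tropMul Y U, ?_⟩
          calc B = tropMul Y (tropMul (tropMul U P) B) := hY
          _ = tropMul Y (tropMul U (tropMul P B)) := by rw [tropMul_assoc U P B]
          _ = tropMul (tropMul Y U) (tropMul P B) := by
              rw [tropMul_assoc Y U (tropMul P B)]
      · -- B = A ⊗ V
        refine ⟨tropMul P B, ⟨Or.inr ⟨Q, hPQ⟩, ?_⟩, Or.inr ⟨P, rfl⟩, ?_⟩
        · have hform : tropMul P B
              = tropMul P (tropMul (tropMul P B) (tropMul Q V)) := by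
            calc tropMul P B = tropMul P (tropMul A V) := by rw [← hV]
            _ = tropMul P (tropMul (tropMul (tropMul P B) Q) V) := by rw [hPQ]
            _ = tropMul P (tropMul (tropMul P B) (tropMul Q V)) := by
                rw [tropMul_assoc (tropMul P B) Q V]
          obtain ⟨X, hX⟩ := Rstab (tropMul P B) P (tropMul Q V) hform
          refine Or.inr ⟨tropMul V X, ?_⟩
          calc tropMul P B = tropMul (tropMul (tropMul P B) (tropMul Q V)) X := hX
          _ = tropMul (tropMul (tropMul (tropMul P B) Q) V) X := by
              rw [tropMul_assoc (tropMul P B) Q V]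
          _ = tropMul (tropMul (tropMul P B) Q) (tropMul V X) := by
              rw [tropMul_assoc (tropMul (tropMul P B) Q) V X]
          _ = tropMul A (tropMul V X) := by rw [← hPQ]
        · have hform : B = tropMul (tropMul P B) (tropMul Q V) := by
            calc B = tropMul A V := hV
            _ = tropMul (tropMul (tropMul P B) Q) V := by rw [hPQ]
            _ = tropMul (tropMul P B) (tropMul Q V) := by
                rw [tropMul_assoc (tropMul P B) Q V]
          obtain ⟨Y, hY⟩ := Lstab B P (tropMul Q V) hform
          exact Or.inr ⟨Y, hY⟩
      · -- B = (U ⊗ A) ⊗ V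
        refine ⟨tropMul P B, ⟨Or.inr ⟨Q, hPQ⟩, ?_⟩, Or.inr ⟨P, rfl⟩, ?_⟩
        · have hform : tropMul P B
              = tropMul (tropMul P U) (tropMul (tropMul P B) (tropMul Q V)) := by
            calc tropMul P B = tropMul P (tropMul (tropMul U A) V) := by rw [← hUV]
            _ = tropMul P (tropMul U (tropMul A V)) := by rw [tropMul_assoc U A V]
            _ = tropMul (tropMul P U) (tropMul A V) := by
                rw [tropMul_assoc P U (tropMul A V)]
            _ = tropMul (tropMul P U) (tropMul (tropMul (tropMul P B) Q) V) := by
                rw [hPQ]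
            _ = tropMul (tropMul P U) (tropMul (tropMul P B) (tropMul Q V)) := by
                rw [tropMul_assoc (tropMul P B) Q V]
          obtain ⟨X, hX⟩ := Rstab (tropMul P B) (tropMul P U) (tropMul Q V) hform
          refine Or.inr ⟨tropMul V X, ?_⟩
          calc tropMul P B = tropMul (tropMul (tropMul P B) (tropMul Q V)) X := hX
          _ = tropMul (tropMul (tropMul (tropMul P B) Q) V) X := by
              rw [tropMul_assoc (tropMul P B) Q V]
          _ = tropMul (tropMul (tropMul P B) Q) (tropMul V X) := by
              rw [tropMul_assoc (tropMul (tropMul P B) Q) V X]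
          _ = tropMul A (tropMul V X) := by rw [← hPQ]
        · have hform : B = tropMul (tropMul (tropMul U P) B) (tropMul Q V) := by
            calc B = tropMul (tropMul U A) V := hUV
            _ = tropMul (tropMul U (tropMul (tropMul P B) Q)) V := by rw [hPQ]
            _ = tropMul (tropMul (tropMul U (tropMul P B)) Q) V := by
                rw [tropMul_assoc U (tropMul P B) Q]
            _ = tropMul (tropMul (tropMul (tropMul U P) B) Q) V := by
                rw [tropMul_assoc U P B]
            _ = tropMul (tropMul (tropMul U P) B) (tropMul Q V) := by
                rw [tropMul_assoc (tropMul (tropMul U P) B) Q V]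
          obtain ⟨Y, hY⟩ := Lstab B (tropMul U P) (tropMul Q V) hform
          refine Or.inr ⟨tropMul Y U, ?_⟩
          calc B = tropMul Y (tropMul (tropMul U P) B) := hY
          _ = tropMul Y (tropMul U (tropMul P B)) := by rw [tropMul_assoc U P B]
          _ = tropMul (tropMul Y U) (tropMul P B) := by
              rw [tropMul_assoc Y U (tropMul P B)]
  · rintro ⟨C, ⟨hAC, hCA⟩, hCB, hBC⟩
    constructor
    · rcases hAC with h1 | ⟨Q, h1⟩ <;> rcases hCB with h2 | ⟨P, h2⟩
      · exact Or.inl (h1.trans h2)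
      · exact Or.inr (Or.inl ⟨P, h1.trans h2⟩)
      · exact Or.inr (Or.inr (Or.inl ⟨Q, by rw [h1, h2]⟩))
      · exact Or.inr (Or.inr (Or.inr ⟨P, Q, by rw [h1, h2]⟩))
    · rcases hBC with h1 | ⟨Y, h1⟩ <;> rcases hCA with h2 | ⟨X, h2⟩
      · exact Or.inl (h1.trans h2)
      · exact Or.inr (Or.inr (Or.inl ⟨X, h1.trans h2⟩))
      · exact Or.inr (Or.inl ⟨Y, by rw [h1, h2]⟩)
      · refine Or.inr (Or.inr (Or.inr ⟨Y, X, ?_⟩))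
        rw [h1, h2, ← tropMul_assoc]
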